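/- (Corollary, no vertical spread arbitrage.) Let ω : ℝ → (0, ∞) be differentiable and suppose that for every κ ∈ ℝ, Φ(z₊(κ)) + φ(z₊(κ)) ω'(κ) ≥ 0, where z₊(κ) = (κ + ω(κ)²/2)/ω(κ). Then the put price slice P(κ) = exp κ · Φ(z₊(κ)) − Φ(z₋(κ)), with z₋(κ) = (κ − ω(κ)²/2)/ω(κ), is monotone nondecreasing on ℝ. -/

import Mathlib

open MeasureTheory Real

/-- Standard normal probability density function. -/
noncomputable def stdNormalPDF (z : ℝ) : ℝ := Real.exp (-z ^ 2 / 2) / Real.sqrt (2 * Real.pi)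

/-- Standard normal cumulative distribution function. -/
noncomputable def stdNormalCDF (z : ℝ) : ℝ := ∫ u in Set.Iic z, stdNormalPDF u

lemma continuous_stdNormalPDF : Continuous stdNormalPDF := by
  unfold stdNormalPDF
  fun_prop

lemma integrable_stdNormalPDF : Integrable stdNormalPDF := by
  have h : Integrable (fun x : ℝ => Real.exp (-(1/2) * x ^ 2)) :=
    integrable_exp_neg_mul_sq (by norm_num)
  have := h.div_const (Real.sqrt (2 * Real.pi))
  convert this using 2 with x
  unfold stdNormalPDF
  ring_nf

lemma hasDerivAt_stdNormalCDF (z : ℝ) : HasDerivAt stdNormalCDF (stdNormalPDF z) z := by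
  have key : ∀ x : ℝ, stdNormalCDF x = stdNormalCDF 0 + ∫ t in (0:ℝ)..x, stdNormalPDF t := by
    intro x
    have := intervalIntegral.integral_Iic_sub_Iic (f := stdNormalPDF) (μ := volume) (a := 0) (b := x)
      integrable_stdNormalPDF.integrableOn integrable_stdNormalPDF.integrableOn
    unfold stdNormalCDF
    linarith
  have hd : HasDerivAt (fun x => stdNormalCDF 0 + ∫ t in (0:ℝ)..x, stdNormalPDF t)
      (stdNormalPDF z) z := by
    refine HasDerivAt.const_add _ ?_
    exact intervalIntegral.integral_hasDerivAt_right
      (integrable_stdNormalPDF.intervalIntegrable)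
      (continuous_stdNormalPDF.stronglyMeasurable.stronglyMeasurableAtFilter)
      (continuous_stdNormalPDF.continuousAt)
  exact hd.congr_of_eventuallyEq (Filter.Eventually.of_forall key)

lemma pdf_pivot (w κ : ℝ) (h : w ≠ 0) :
    stdNormalPDF ((κ - w ^ 2 / 2) / w) = Real.exp κ * stdNormalPDF ((κ + w ^ 2 / 2) / w) := by
  unfold stdNormalPDF
  rw [← mul_div_assoc, ← Real.exp_add]
  congr 1
  field_simp
  ring

theorem no_vertical_spread_arbitrage (ω ω' : ℝ → ℝ)
    (hpos : ∀ κ, 0 < ω κ)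
    (hderiv : ∀ κ, HasDerivAt ω (ω' κ) κ)
    (hvert : ∀ κ, 0 ≤ stdNormalCDF ((κ + ω κ ^ 2 / 2) / ω κ)
      + stdNormalPDF ((κ + ω κ ^ 2 / 2) / ω κ) * ω' κ) :
    Monotone (fun κ => Real.exp κ * stdNormalCDF ((κ + ω κ ^ 2 / 2) / ω κ)
      - stdNormalCDF ((κ - ω κ ^ 2 / 2) / ω κ)) := by
  have hP : ∀ κ, HasDerivAt
      (fun κ => Real.exp κ * stdNormalCDF ((κ + ω κ ^ 2 / 2) / ω κ)
        - stdNormalCDF ((κ - ω κ ^ 2 / 2) / ω κ))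
      (Real.exp κ * (stdNormalCDF ((κ + ω κ ^ 2 / 2) / ω κ)
        + stdNormalPDF ((κ + ω κ ^ 2 / 2) / ω κ) * ω' κ)) κ := by
    intro κ
    have hw : ω κ ≠ 0 := (hpos κ).ne'
    -- derivative of numerators
    have hnumP : HasDerivAt (fun κ => κ + ω κ ^ 2 / 2) (1 + ω κ * ω' κ) κ := by
      have := (hasDerivAt_id κ).add (((hderiv κ).pow 2).div_const 2)
      refine this.congr_deriv ?_
      ring
    have hnumM : HasDerivAt (fun κ => κ - ω κ ^ 2 / 2) (1 - ω κ * ω' κ) κ := by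
      have := (hasDerivAt_id κ).sub (((hderiv κ).pow 2).div_const 2)
      refine this.congr_deriv ?_
      ring
    have hzP := hnumP.div (hderiv κ) hw
    have hzM := hnumM.div (hderiv κ) hw
    have hΦP := (hasDerivAt_stdNormalCDF ((κ + ω κ ^ 2 / 2) / ω κ)).comp κ hzP
    have hΦM := (hasDerivAt_stdNormalCDF ((κ - ω κ ^ 2 / 2) / ω κ)).comp κ hzM
    have hmain := ((Real.hasDerivAt_exp κ).mul hΦP).sub hΦM
    refine hmain.congr_deriv ?_
    rw [pdf_pivot (ω κ) κ hw]
    simp only [Function.comp_apply, Pi.div_apply]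
    field_simp
    ring
  have hdiff : Differentiable ℝ (fun κ => Real.exp κ * stdNormalCDF ((κ + ω κ ^ 2 / 2) / ω κ)
      - stdNormalCDF ((κ - ω κ ^ 2 / 2) / ω κ)) := fun κ => (hP κ).differentiableAt
  apply monotone_of_deriv_nonneg hdiff
  intro κ
  rw [(hP κ).deriv]
  exact mul_nonneg (Real.exp_pos κ).le (hvert κ)
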